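/- Let U and V be linear subspaces of ℝ^d such that U ∩ V^⊥ = {0}. Then there exists a positive definite linear map H : ℝ^d → ℝ^d such that H(U) ⊆ V. -/

import Mathlib

/-- If `U ∩ V^⊥ = {0}`, there is a positive definite linear map `H` (i.e.
`xᵀHx > 0` for all `x ≠ 0`, not necessarily symmetric) with `H(U) ⊆ V`. -/
theorem exists_posdef_map_into {d : ℕ}
    (U V : Submodule ℝ (EuclideanSpace ℝ (Fin d)))
    (h : U ⊓ Vᗮ = ⊥) :
    ∃ H : EuclideanSpace ℝ (Fin d) →ₗ[ℝ] EuclideanSpace ℝ (Fin d),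
      (∀ x, x ≠ 0 → 0 < (inner ℝ x (H x) : ℝ)) ∧ U.map H ≤ V := by
  classical
  set E := EuclideanSpace ℝ (Fin d)
  set P : E →ₗ[ℝ] E := U.subtype ∘ₗ (U.orthogonalProjectionOnto).toLinearMap with hPdef
  set Q : E →ₗ[ℝ] E := V.subtype ∘ₗ (V.orthogonalProjectionOnto).toLinearMap with hQdef
  set H : E →ₗ[ℝ] E := Q ∘ₗ P + (LinearMap.id - P) with hHdef
  refine ⟨H, ?_, ?_⟩
  · intro x hx
    set u : E := P x with hu_def
    set v : E := Q u with hv_def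
    set w : E := x - u with hw_def
    have hu : u ∈ U := (U.orthogonalProjectionOnto x).2
    have hvV : v ∈ V := (V.orthogonalProjectionOnto u).2
    have hwU : w ∈ Uᗮ := U.sub_starProjection_mem_orthogonal x
    have huv : u - v ∈ Vᗮ := V.sub_starProjection_mem_orthogonal u
    have hHx : H x = v + w := by
      simp only [hHdef, LinearMap.add_apply, LinearMap.comp_apply, LinearMap.sub_apply,
        LinearMap.id_apply, ← hu_def, ← hv_def, hw_def]
    have hx_eq : x = u + w := by simp [hw_def]
    have huw : (inner ℝ u w : ℝ) = 0 := hwU u hu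
    have huv' : (inner ℝ u v : ℝ) = ‖v‖ ^ 2 := by
      have h0 : (inner ℝ v (u - v) : ℝ) = 0 := huv v hvV
      have : (inner ℝ v u : ℝ) - inner ℝ v v = 0 := by
        rw [← inner_sub_right]; exact h0
      have hvv : (inner ℝ v v : ℝ) = ‖v‖ ^ 2 := real_inner_self_eq_norm_sq v
      rw [real_inner_comm]; linarith
    have hwv : |(inner ℝ w v : ℝ)| ≤ ‖w‖ * ‖v‖ := abs_real_inner_le_norm w v
    have hexp : (inner ℝ x (H x) : ℝ)
        = ‖v‖ ^ 2 + inner ℝ w v + ‖w‖ ^ 2 := by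
      rw [hHx, hx_eq]
      rw [inner_add_left, inner_add_right, inner_add_right]
      have hwu : (inner ℝ w u : ℝ) = 0 := by rw [real_inner_comm]; exact huw
      have hww : (inner ℝ w w : ℝ) = ‖w‖ ^ 2 := real_inner_self_eq_norm_sq w
      rw [huv', hww]
      have huw2 : (inner ℝ u w : ℝ) = 0 := huw
      linarith
    rw [hexp]
    have hpos : v ≠ 0 ∨ w ≠ 0 := by
      by_contra hc
      push_neg at hc
      obtain ⟨hv0, hw0⟩ := hc
      have huV : u ∈ Vᗮ := by
        have := huv
        rwa [hv0, sub_zero] at this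
      have : u ∈ U ⊓ Vᗮ := ⟨hu, huV⟩
      rw [h, Submodule.mem_bot] at this
      apply hx
      rw [hx_eq, this, hw0, add_zero]
    have h2 : 0 < ‖v‖ ^ 2 + ‖w‖ ^ 2 := by
      rcases hpos with h1 | h1
      · have := norm_pos_iff.mpr h1
        nlinarith [sq_nonneg ‖w‖]
      · have := norm_pos_iff.mpr h1
        nlinarith [sq_nonneg ‖v‖]
    have habs := abs_le.mp hwv
    nlinarith [sq_nonneg (‖v‖ - ‖w‖), norm_nonneg v, norm_nonneg w]
  · rintro _ ⟨x, hxU, rfl⟩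
    have hPx : P x = x := by
      exact U.starProjection_eq_self_iff.mpr hxU
    have : H x = Q x := by
      simp [hHdef, LinearMap.add_apply, LinearMap.comp_apply, LinearMap.sub_apply, hPx]
    rw [this]
    exact (V.orthogonalProjectionOnto x).2
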